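/- Let p be a prime, h ≥ 1, and m₁, ..., m_h nonnegative integers. For G = ∏_{i=1}^{h} (ℤ/pⁱℤ)^{m_i}, Σ_{g ∈ G} 1/|g| = 1 + Σ_{l=1}^{h} (p^{Σ_{i=l}^{h} m_i} − 1) · p^{Σ_{i=1}^{l−1} i m_i + (l−1) Σ_{i=l}^{h} m_i} / p^l, where |g| is the order of g. -/

import Mathlib

open Finset

lemma card_torsion (a b : ℕ) [NeZero a] [NeZero b] :
    Nat.card {x : ZMod (a * b) // a • x = 0} = a := by
  have hab : NeZero (a * b) := ⟨Nat.mul_ne_zero (NeZero.ne a) (NeZero.ne b)⟩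
  have hb : 0 < b := Nat.pos_of_ne_zero (NeZero.ne b)
  let f : ZMod a → {x : ZMod (a * b) // a • x = 0} := fun x =>
    ⟨((b * x.val : ℕ) : ZMod (a * b)), by
      rw [nsmul_eq_mul, ← Nat.cast_mul, ← mul_assoc, ZMod.natCast_eq_zero_iff]
      exact dvd_mul_right _ _⟩
  have hf : Function.Bijective f := by
    constructor
    · intro x y hxy
      have hx := ZMod.val_lt x
      have hy := ZMod.val_lt y
      have h1 : b * x.val < a * b := by nlinarith
      have h2 : b * y.val < a * b := by nlinarith
      have h3 := congrArg (fun z => ZMod.val z.val) hxy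
      simp only [f] at h3
      rw [ZMod.val_natCast_of_lt h1, ZMod.val_natCast_of_lt h2] at h3
      exact ZMod.val_injective a (Nat.eq_of_mul_eq_mul_left hb h3)
    · rintro ⟨y, hy⟩
      have hyv : ((y.val : ℕ) : ZMod (a * b)) = y := by
        rw [ZMod.natCast_val, ZMod.cast_id]
      have h0 : ((a * y.val : ℕ) : ZMod (a * b)) = 0 := by
        push_cast
        rw [hyv, ← nsmul_eq_mul]
        exact_mod_cast hy
      rw [ZMod.natCast_eq_zero_iff] at h0
      have hbdvd : b ∣ y.val := by
        rcases h0 with ⟨c, hc⟩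
        refine ⟨c, ?_⟩
        have ha : 0 < a := Nat.pos_of_ne_zero (NeZero.ne a)
        have : a * y.val = a * (b * c) := by rw [hc]; ring
        exact Nat.eq_of_mul_eq_mul_left ha this
      obtain ⟨c, hc⟩ := hbdvd
      have hca : c < a := by
        have := ZMod.val_lt y
        rw [hc] at this
        by_contra hle
        push_neg at hle
        have : b * a ≤ b * c := Nat.mul_le_mul_left b hle
        nlinarith
      refine ⟨(c : ZMod a), ?_⟩
      apply Subtype.ext
      show ((b * ((c : ZMod a)).val : ℕ) : ZMod (a * b)) = y
      rw [ZMod.val_natCast_of_lt hca, ← hc, hyv]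
  rw [← Nat.card_congr (Equiv.ofBijective f hf), Nat.card_zmod]

lemma card_comp {p : ℕ} (hp : p.Prime) (l k : ℕ) :
    Nat.card {x : ZMod (p ^ k) // p ^ l • x = 0} = p ^ (min l k) := by
  have hp1 : 1 < p := hp.one_lt
  haveI : NeZero (p ^ k) := ⟨pow_ne_zero _ hp.ne_zero⟩
  set t := min l k with ht
  have htk : t ≤ k := min_le_right _ _
  have key : ∀ x : ZMod (p ^ k), p ^ l • x = 0 ↔ p ^ t • x = 0 := by
    intro x
    constructor
    · intro hx
      have h1 : addOrderOf x ∣ p ^ l := addOrderOf_dvd_of_nsmul_eq_zero hx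
      have h2 : addOrderOf x ∣ p ^ k := addOrderOf_dvd_of_nsmul_eq_zero (by
        simp [nsmul_eq_mul, ZMod.natCast_self])
      obtain ⟨s, hsl, hs⟩ := (Nat.dvd_prime_pow hp).mp h1
      have hsk : s ≤ k := by
        rw [hs] at h2
        exact (Nat.pow_dvd_pow_iff_le_right hp1).mp h2
      have : addOrderOf x ∣ p ^ t := hs ▸ pow_dvd_pow p (le_min hsl hsk)
      exact addOrderOf_dvd_iff_nsmul_eq_zero.mp this
    · intro hx
      obtain ⟨c, hc⟩ : p ^ t ∣ p ^ l := pow_dvd_pow p (min_le_left _ _)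
      rw [hc, mul_nsmul, hx, smul_zero]
  have hcongr : Nat.card {x : ZMod (p ^ k) // p ^ l • x = 0}
      = Nat.card {x : ZMod (p ^ k) // p ^ t • x = 0} :=
    Nat.card_congr (Equiv.subtypeEquivRight key)
  rw [hcongr]
  have hsplit : p ^ t * p ^ (k - t) = p ^ k := by
    rw [← pow_add]; congr 1; omega
  haveI : NeZero (p ^ t) := ⟨pow_ne_zero _ hp.ne_zero⟩
  haveI : NeZero (p ^ (k - t)) := ⟨pow_ne_zero _ hp.ne_zero⟩
  rw [← hsplit]
  exact card_torsion (p ^ t) (p ^ (k - t))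

lemma fin_sum_to_icc (h : ℕ) (f : ℕ → ℕ) :
    ∑ i : Fin h, f ((i : ℕ) + 1) = ∑ i ∈ Finset.Icc 1 h, f i := by
  rw [Fin.sum_univ_eq_sum_range (fun i => f (i + 1)), ← Finset.Ico_add_one_right_eq_Icc,
    Finset.sum_Ico_eq_sum_range]
  simp [add_comm]

lemma N_eq {p : ℕ} (hp : p.Prime) (h : ℕ) (m : ℕ → ℕ) (l : ℕ) :
    Nat.card {g : (∀ i : Fin h, Fin (m ((i : ℕ) + 1)) → ZMod (p ^ ((i : ℕ) + 1))) //
        p ^ l • g = 0} = p ^ (∑ i ∈ Finset.Icc 1 h, min l i * m i) := by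
  have e : {g : (∀ i : Fin h, Fin (m ((i : ℕ) + 1)) → ZMod (p ^ ((i : ℕ) + 1))) //
        p ^ l • g = 0} ≃
      ∀ i : Fin h, ∀ _j : Fin (m ((i : ℕ) + 1)), {x : ZMod (p ^ ((i : ℕ) + 1)) // p ^ l • x = 0} := by
    refine (Equiv.subtypeEquivRight ?_).trans
      ((Equiv.subtypePiEquivPi).trans (Equiv.piCongrRight fun i => Equiv.subtypePiEquivPi))
    intro g
    simp [funext_iff]
  rw [Nat.card_congr e, Nat.card_pi, ← fin_sum_to_icc h (fun i => min l i * m i),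
    ← Finset.prod_pow_eq_pow_sum]
  refine Finset.prod_congr rfl fun i _ => ?_
  rw [Nat.card_pi, Finset.prod_const, Finset.card_univ, Fintype.card_fin, card_comp hp, pow_mul]

lemma E_split (m : ℕ → ℕ) (h l r : ℕ) (h1 : 1 ≤ l) (h2 : l ≤ h) (hr1 : l - 1 ≤ r)
    (hr2 : r ≤ l) :
    ∑ i ∈ Finset.Icc 1 h, min r i * m i
      = (∑ i ∈ Finset.Icc 1 (l - 1), i * m i) + r * ∑ i ∈ Finset.Icc l h, m i := by
  have e0 : Finset.Icc 1 h = Finset.Ioc 0 h := by rw [← Finset.Icc_add_one_left_eq_Ioc]; rfl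
  have e1 : Finset.Icc 1 (l - 1) = Finset.Ioc 0 (l - 1) := by rw [← Finset.Icc_add_one_left_eq_Ioc]; rfl
  have e2 : Finset.Icc l h = Finset.Ioc (l - 1) h := by
    rw [← Finset.Icc_add_one_left_eq_Ioc]; congr 1; omega
  rw [e0, e1, e2, ← Finset.sum_Ioc_consecutive _ (Nat.zero_le (l - 1)) (by omega : l - 1 ≤ h)]
  congr 1
  · refine Finset.sum_congr rfl fun i hi => ?_
    rw [Finset.mem_Ioc] at hi
    have : min r i = i := by omega
    rw [this]
  · rw [Finset.mul_sum]
    refine Finset.sum_congr rfl fun i hi => ?_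
    rw [Finset.mem_Ioc] at hi
    have : min r i = r := by omega
    rw [this]

theorem stmt_14 (p : ℕ) (hp : p.Prime) [NeZero p] (h : ℕ) (hh : 1 ≤ h) (m : ℕ → ℕ) :
    ∑ g : (∀ i : Fin h, Fin (m ((i : ℕ) + 1)) → ZMod (p ^ ((i : ℕ) + 1))),
        1 / (addOrderOf g : ℚ) =
      1 + ∑ l ∈ Finset.Icc 1 h,
        ((p : ℚ) ^ (∑ i ∈ Finset.Icc l h, m i) - 1) *
          (p : ℚ) ^ (∑ i ∈ Finset.Icc 1 (l - 1), i * m i + (l - 1) * ∑ i ∈ Finset.Icc l h, m i) /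
          (p : ℚ) ^ l := by
  classical
  have hp1 : 1 < p := hp.one_lt
  set G := (∀ i : Fin h, Fin (m ((i : ℕ) + 1)) → ZMod (p ^ ((i : ℕ) + 1))) with hGdef
  have hord : ∀ g : G, ∃ l, l ≤ h ∧ addOrderOf g = p ^ l := by
    intro g
    have hsm : p ^ h • g = 0 := by
      funext i j
      show p ^ h • g i j = 0
      have hih : (i : ℕ) + 1 ≤ h := i.2
      obtain ⟨c, hc⟩ : p ^ ((i : ℕ) + 1) ∣ p ^ h := pow_dvd_pow p hih
      have hz : p ^ ((i : ℕ) + 1) • g i j = 0 := by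
        simp [nsmul_eq_mul, ZMod.natCast_self]
      rw [hc, mul_nsmul, hz, smul_zero]
    have hdvd : addOrderOf g ∣ p ^ h := addOrderOf_dvd_of_nsmul_eq_zero hsm
    obtain ⟨l, hl, he⟩ := (Nat.dvd_prime_pow hp).mp hdvd
    exact ⟨l, hl, he⟩
  have hfib : ∀ g : G, addOrderOf g = p ^ (Nat.log p (addOrderOf g)) ∧
      Nat.log p (addOrderOf g) ≤ h := by
    intro g
    obtain ⟨l, hl, he⟩ := hord g
    rw [he, Nat.log_pow hp1]
    exact ⟨rfl, hl⟩
  -- fiberwise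
  rw [← Finset.sum_fiberwise_of_maps_to
    (g := fun g : G => Nat.log p (addOrderOf g)) (t := Finset.range (h + 1))
    (fun g _ => Finset.mem_range.mpr (Nat.lt_succ_of_le (hfib g).2))
    (fun g => 1 / (addOrderOf g : ℚ))]
  have inner : ∀ l, ∑ g ∈ Finset.univ.filter (fun g : G => Nat.log p (addOrderOf g) = l),
      (1 : ℚ) / (addOrderOf g : ℚ)
      = ((Finset.univ.filter (fun g : G => addOrderOf g = p ^ l)).card : ℚ) / (p : ℚ) ^ l := by
    intro l
    have hset : Finset.univ.filter (fun g : G => Nat.log p (addOrderOf g) = l)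
        = Finset.univ.filter (fun g : G => addOrderOf g = p ^ l) := by
      ext g
      simp only [Finset.mem_filter, Finset.mem_univ, true_and]
      constructor
      · intro hl; rw [← hl]; exact (hfib g).1
      · intro hl; rw [hl, Nat.log_pow hp1]
    rw [hset]
    have hterm : ∀ g ∈ Finset.univ.filter (fun g : G => addOrderOf g = p ^ l),
        (1 : ℚ) / (addOrderOf g : ℚ) = 1 / ((p : ℚ) ^ l) := by
      intro g hg
      rw [(Finset.mem_filter.mp hg).2]
      push_cast
      ring
    rw [Finset.sum_congr rfl hterm, Finset.sum_const, nsmul_eq_mul]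
    ring
  rw [Finset.sum_congr rfl (fun l _ => inner l)]
  -- cards
  have hNl : ∀ l, (Finset.univ.filter (fun g : G => p ^ l • g = 0)).card
      = p ^ (∑ i ∈ Finset.Icc 1 h, min l i * m i) := by
    intro l
    rw [← Fintype.card_subtype, ← Nat.card_eq_fintype_card]
    exact N_eq hp h m l
  have hc0 : (Finset.univ.filter (fun g : G => addOrderOf g = p ^ 0)).card = 1 := by
    simp only [pow_zero, AddMonoid.addOrderOf_eq_one_iff]
    simp [Finset.filter_eq']
  have hcl : ∀ l, 1 ≤ l →
      (Finset.univ.filter (fun g : G => addOrderOf g = p ^ l)).card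
        = p ^ (∑ i ∈ Finset.Icc 1 h, min l i * m i)
          - p ^ (∑ i ∈ Finset.Icc 1 h, min (l - 1) i * m i) := by
    intro l hl1
    have hsub : Finset.univ.filter (fun g : G => p ^ (l - 1) • g = 0)
        ⊆ Finset.univ.filter (fun g : G => p ^ l • g = 0) := by
      intro g hg
      simp only [Finset.mem_filter, Finset.mem_univ, true_and] at hg ⊢
      obtain ⟨c, hc⟩ : p ^ (l - 1) ∣ p ^ l := pow_dvd_pow p (by omega)
      rw [hc, mul_nsmul, hg, smul_zero]
    have hset : Finset.univ.filter (fun g : G => addOrderOf g = p ^ l)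
        = Finset.univ.filter (fun g : G => p ^ l • g = 0)
          \ Finset.univ.filter (fun g : G => p ^ (l - 1) • g = 0) := by
      ext g
      simp only [Finset.mem_sdiff, Finset.mem_filter, Finset.mem_univ, true_and]
      constructor
      · intro he
        refine ⟨addOrderOf_dvd_iff_nsmul_eq_zero.mp (he ▸ dvd_refl _), fun hzero => ?_⟩
        have hd : p ^ l ∣ p ^ (l - 1) := he ▸ addOrderOf_dvd_of_nsmul_eq_zero hzero
        have := (Nat.pow_dvd_pow_iff_le_right hp1).mp hd
        omega
      · rintro ⟨h1, h2⟩
        have hdvd : addOrderOf g ∣ p ^ l := addOrderOf_dvd_of_nsmul_eq_zero h1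
        obtain ⟨s, hsl, hs⟩ := (Nat.dvd_prime_pow hp).mp hdvd
        rcases eq_or_lt_of_le hsl with he | hlt
        · rw [hs, he]
        · exfalso
          exact h2 (addOrderOf_dvd_iff_nsmul_eq_zero.mp
            (hs ▸ pow_dvd_pow p (by omega : s ≤ l - 1)))
    rw [hset, Finset.card_sdiff_of_subset hsub, hNl, hNl]
  -- split off l = 0
  have hrange : Finset.range (h + 1) = insert 0 (Finset.Icc 1 h) := by
    ext x
    simp only [Finset.mem_range, Finset.mem_insert, Finset.mem_Icc]
    omega
  rw [hrange, Finset.sum_insert (by simp)]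
  rw [hc0]
  norm_num
  refine Finset.sum_congr rfl fun l hl => ?_
  rw [Finset.mem_Icc] at hl
  obtain ⟨hl1, hlh⟩ := hl
  rw [hcl l hl1]
  set S := ∑ i ∈ Finset.Icc 1 (l - 1), i * m i with hS
  set A := ∑ i ∈ Finset.Icc l h, m i with hA
  have eEl : ∑ i ∈ Finset.Icc 1 h, min l i * m i = S + l * A :=
    E_split m h l l hl1 hlh (by omega) le_rfl
  have eEl' : ∑ i ∈ Finset.Icc 1 h, min (l - 1) i * m i = S + (l - 1) * A :=
    E_split m h l (l - 1) hl1 hlh le_rfl (by omega)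
  rw [eEl, eEl']
  have hle : p ^ (S + (l - 1) * A) ≤ p ^ (S + l * A) :=
    Nat.pow_le_pow_right hp.pos (by
      have : (l - 1) * A ≤ l * A := Nat.mul_le_mul_right A (by omega)
      omega)
  rw [Nat.cast_sub hle]
  have hexp : S + l * A = (S + (l - 1) * A) + A := by
    have hA' : A ≤ l * A := Nat.le_mul_of_pos_left A (by omega)
    rw [Nat.sub_one_mul]
    omega
  rw [hexp]
  push_cast
  rw [pow_add]
  ring
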